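/- Let X = ℝ^d with a probability distribution P having a density with respect to Lebesgue measure. Let F be either the class T_∞ of axis-parallel decision trees of arbitrary finite depth with values in [−1,1], or the class C of continuous functions ℝ^d → [−1,1], or the class D of differentiable functions ℝ^d → [−1,1]. Fix f ∈ F, x_0 ∈ ℝ^d, and a weak counterfactual explanation x_C ∈ X with c_f(x_C) ≠ c_f(x_0). Then for every n ∈ ℕ the weak counterfactual explanation is non-informative: R_n(F_explain) = R_n(F_predict). -/

import Mathlib

open MeasureTheory
open scoped ENNReal

/-- The distribution of one sample: a point drawn from `μ` together with an independent
Rademacher sign (uniform on `{-1, +1}`), taken as an `n`-fold product. -/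
noncomputable def sampleMeasure {α : Type*} [MeasurableSpace α] (μ : Measure α) (n : ℕ) :
    Measure (Fin n → α × ℝ) :=
  Measure.pi fun _ =>
    μ.prod ((2 : ℝ≥0∞)⁻¹ • Measure.dirac (-1 : ℝ) + (2 : ℝ≥0∞)⁻¹ • Measure.dirac (1 : ℝ))

/-- Rademacher complexity `R_n(F) = E_{x,σ} sup_{g ∈ F} (1/n) ∑ σ_i g(x_i)`. -/
noncomputable def rademacher {α : Type*} [MeasurableSpace α] (μ : Measure α) (n : ℕ)
    (F : Set (α → ℝ)) : ℝ :=
  ∫ ω, sSup ((fun g => (n : ℝ)⁻¹ * ∑ i, (ω i).2 * g (ω i).1) '' F) ∂(sampleMeasure μ n)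

/-- Axis-parallel decision trees of depth at most `K`, defined inductively: a tree of
depth `0` is a constant function; a tree of depth at most `K+1` is either a tree of depth
at most `K`, or a threshold split on some coordinate between two trees of depth at most `K`. -/
def IsTree {d : ℕ} : ℕ → ((Fin d → ℝ) → ℝ) → Prop
  | 0, g => ∃ c : ℝ, g = fun _ => c
  | K + 1, g => IsTree K g ∨
      ∃ (j : Fin d) (t : ℝ) (g₁ g₂ : (Fin d → ℝ) → ℝ), IsTree K g₁ ∧ IsTree K g₂ ∧
        g = fun x => if x j ≤ t then g₁ x else g₂ x

lemma isTree_add {d K : ℕ} {g : (Fin d → ℝ) → ℝ} (m : ℕ) (h : IsTree K g) :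
    IsTree (K + m) g := by
  induction m with
  | zero => exact h
  | succ m ih => exact Or.inl ih

lemma isTree_mono {d K K' : ℕ} {g : (Fin d → ℝ) → ℝ} (hle : K ≤ K') (h : IsTree K g) :
    IsTree K' g := by
  obtain ⟨m, rfl⟩ := Nat.exists_eq_add_of_le hle
  exact isTree_add m h

open Classical in
lemma isTree_box {d : ℕ} (c δ : ℝ) (xC : Fin d → ℝ) (g : (Fin d → ℝ) → ℝ) (K : ℕ)
    (hg : IsTree K g) (l : List (Fin d)) :
    ∃ K', IsTree K'
      (fun x => if ∀ j ∈ l, xC j - δ < x j ∧ x j ≤ xC j + δ then c else g x) := by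
  induction l with
  | nil =>
      refine ⟨0, c, ?_⟩
      funext x
      simp
  | cons j l ih =>
      obtain ⟨K₁, h₁⟩ := ih
      refine ⟨max K K₁ + 2, ?_⟩
      have e : (fun x => if ∀ k ∈ j :: l, xC k - δ < x k ∧ x k ≤ xC k + δ then c else g x)
          = fun x => if x j ≤ xC j + δ then
              (if x j ≤ xC j - δ then g x
                else (if ∀ k ∈ l, xC k - δ < x k ∧ x k ≤ xC k + δ then c else g x))
            else g x := by
        funext x
        simp only [List.forall_mem_cons]
        by_cases h1 : x j ≤ xC j + δ
        · by_cases h2 : x j ≤ xC j - δ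
          · rw [if_pos h1, if_pos h2, if_neg]
            rintro ⟨⟨hlt, -⟩, -⟩
            exact absurd hlt (not_lt.mpr h2)
          · by_cases h3 : ∀ k ∈ l, xC k - δ < x k ∧ x k ≤ xC k + δ
            · rw [if_pos h1, if_neg h2, if_pos h3, if_pos ⟨⟨not_le.mp h2, h1⟩, h3⟩]
            · rw [if_pos h1, if_neg h2, if_neg h3, if_neg (fun h => h3 h.2)]
        · rw [if_neg h1, if_neg (fun h => h1 h.1.2)]
      rw [e]
      exact Or.inr ⟨j, xC j + δ, _, g,
        Or.inr ⟨j, xC j - δ, g, _, isTree_mono (le_max_left _ _) hg,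
          isTree_mono (le_max_right _ _) h₁, rfl⟩,
        isTree_mono (by omega) hg, rfl⟩

lemma exists_flip {d n : ℕ}
    (F : Set ((Fin d → ℝ) → ℝ))
    (hF : F = {g | (∃ K, IsTree K g) ∧ ∀ x, g x ∈ Set.Icc (-1 : ℝ) 1} ∨
          F = {g | Continuous g ∧ ∀ x, g x ∈ Set.Icc (-1 : ℝ) 1} ∨
          F = {g | Differentiable ℝ g ∧ ∀ x, g x ∈ Set.Icc (-1 : ℝ) 1})
    (g : (Fin d → ℝ) → ℝ) (hg : g ∈ F) (x₀ xC : Fin d → ℝ) (hne : x₀ ≠ xC)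
    (pts : Fin n → (Fin d → ℝ)) (hpts : ∀ i, pts i ≠ xC) :
    ∃ g' ∈ F, g' x₀ = g x₀ ∧ Real.sign (g' xC) ≠ Real.sign (g' x₀) ∧
      ∀ i, g' (pts i) = g (pts i) := by
  classical
  set c : ℝ := if Real.sign (g x₀) = 1 then (-1 : ℝ) else 1 with hc
  have hcIcc : c ∈ Set.Icc (-1 : ℝ) 1 := by
    rw [hc]; split <;> norm_num
  have hcsign : Real.sign c ≠ Real.sign (g x₀) := by
    by_cases h : Real.sign (g x₀) = 1
    · have : c = -1 := by rw [hc, if_pos h]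
      rw [this, h, Real.sign_of_neg (by norm_num : (-1 : ℝ) < 0)]
      norm_num
    · have : c = 1 := by rw [hc, if_neg h]
      rw [this, Real.sign_one]
      exact fun e => h e.symm
  set s : Finset (Fin d → ℝ) := insert x₀ (Finset.image pts Finset.univ) with hsdef
  have hx₀s : x₀ ∈ s := Finset.mem_insert_self _ _
  have hptss : ∀ i, pts i ∈ s := fun i =>
    Finset.mem_insert_of_mem (Finset.mem_image_of_mem pts (Finset.mem_univ i))
  have hsne : s.Nonempty := ⟨x₀, hx₀s⟩
  have hs : ∀ p ∈ s, p ≠ xC := by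
    intro p hp
    rcases Finset.mem_insert.mp hp with h | h
    · exact h ▸ hne
    · obtain ⟨i, _, rfl⟩ := Finset.mem_image.mp h
      exact hpts i
  set r : ℝ := s.inf' hsne (fun p => dist p xC) with hrdef
  have hr : 0 < r := by
    rw [hrdef, Finset.lt_inf'_iff]
    exact fun p hp => dist_pos.mpr (hs p hp)
  have hrle : ∀ p ∈ s, r ≤ dist p xC := fun p hp => Finset.inf'_le _ hp
  rcases hF with hF | hF | hF
  · -- trees
    subst hF
    obtain ⟨⟨K, hK⟩, hb⟩ := hg
    set g' : (Fin d → ℝ) → ℝ :=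
      fun x => if ∀ j ∈ List.finRange d, xC j - r / 2 < x j ∧ x j ≤ xC j + r / 2
        then c else g x with hg'
    have hagree : ∀ p ∈ s, g' p = g p := by
      intro p hp
      rw [hg']
      dsimp only
      rw [if_neg]
      intro hall
      have hd2 : dist p xC ≤ r / 2 := by
        rw [dist_pi_le_iff (by positivity)]
        intro j
        have := hall j (List.mem_finRange j)
        rw [Real.dist_eq, abs_le]
        constructor <;> linarith [this.1, this.2]
      linarith [hrle p hp]
    have hxCval : g' xC = c := by
      rw [hg']
      dsimp only
      rw [if_pos]
      intro j _
      constructor <;> linarith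
    refine ⟨g', ⟨⟨?_, ?_⟩, ?_, ?_, ?_⟩⟩
    · exact isTree_box c (r / 2) xC g K hK (List.finRange d)
    · intro x
      rw [hg']
      dsimp only
      split
      · exact hcIcc
      · exact hb x
    · exact hagree x₀ hx₀s
    · rw [hxCval, hagree x₀ hx₀s]
      exact hcsign
    · exact fun i => hagree _ (hptss i)
  · -- continuous
    subst hF
    obtain ⟨hcont, hb⟩ := hg
    set φ : ContDiffBump xC := ⟨r / 2, r, by positivity, by linarith⟩ with hφ
    set g' : (Fin d → ℝ) → ℝ := fun x => (1 - φ x) * g x + φ x * c with hg'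
    have hφ0 : ∀ p ∈ s, φ p = 0 := fun p hp => φ.zero_of_le_dist (hrle p hp)
    have hagree : ∀ p ∈ s, g' p = g p := by
      intro p hp
      rw [hg']
      dsimp only
      rw [hφ0 p hp]
      ring
    have hxCval : g' xC = c := by
      have h1 : φ xC = 1 := φ.one_of_mem_closedBall (by
        simp [Metric.mem_closedBall]
        positivity)
      rw [hg']
      dsimp only
      rw [h1]
      ring
    refine ⟨g', ⟨⟨?_, ?_⟩, ?_, ?_, ?_⟩⟩
    · exact ((continuous_const.sub φ.continuous).mul hcont).add
        (φ.continuous.mul continuous_const)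
    · intro x
      have h0 : (0 : ℝ) ≤ φ x := φ.nonneg
      have h1 : φ x ≤ 1 := φ.le_one
      have hbx := hb x
      rw [hg']
      dsimp only
      constructor
      · nlinarith [mul_nonneg (by linarith : (0:ℝ) ≤ 1 - φ x)
            (by linarith [hbx.1] : (0:ℝ) ≤ g x + 1),
          mul_nonneg h0 (by linarith [hcIcc.1] : (0:ℝ) ≤ c + 1)]
      · nlinarith [mul_nonneg (by linarith : (0:ℝ) ≤ 1 - φ x)
            (by linarith [hbx.2] : (0:ℝ) ≤ 1 - g x),
          mul_nonneg h0 (by linarith [hcIcc.2] : (0:ℝ) ≤ 1 - c)]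
    · exact hagree x₀ hx₀s
    · rw [hxCval, hagree x₀ hx₀s]
      exact hcsign
    · exact fun i => hagree _ (hptss i)
  · -- differentiable
    subst hF
    obtain ⟨hdiff, hb⟩ := hg
    set φ : ContDiffBump xC := ⟨r / 2, r, by positivity, by linarith⟩ with hφ
    set g' : (Fin d → ℝ) → ℝ := fun x => (1 - φ x) * g x + φ x * c with hg'
    have hφd : Differentiable ℝ (fun x => φ x) :=
      (φ.contDiff (n := 1)).differentiable (by simp)
    have hφ0 : ∀ p ∈ s, φ p = 0 := fun p hp => φ.zero_of_le_dist (hrle p hp)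
    have hagree : ∀ p ∈ s, g' p = g p := by
      intro p hp
      rw [hg']
      dsimp only
      rw [hφ0 p hp]
      ring
    have hxCval : g' xC = c := by
      have h1 : φ xC = 1 := φ.one_of_mem_closedBall (by
        simp [Metric.mem_closedBall]
        positivity)
      rw [hg']
      dsimp only
      rw [h1]
      ring
    refine ⟨g', ⟨⟨?_, ?_⟩, ?_, ?_, ?_⟩⟩
    · exact (((differentiable_const 1).sub hφd).mul hdiff).add
        (hφd.mul (differentiable_const c))
    · intro x
      have h0 : (0 : ℝ) ≤ φ x := φ.nonneg
      have h1 : φ x ≤ 1 := φ.le_one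
      have hbx := hb x
      rw [hg']
      dsimp only
      constructor
      · nlinarith [mul_nonneg (by linarith : (0:ℝ) ≤ 1 - φ x)
            (by linarith [hbx.1] : (0:ℝ) ≤ g x + 1),
          mul_nonneg h0 (by linarith [hcIcc.1] : (0:ℝ) ≤ c + 1)]
      · nlinarith [mul_nonneg (by linarith : (0:ℝ) ≤ 1 - φ x)
            (by linarith [hbx.2] : (0:ℝ) ≤ 1 - g x),
          mul_nonneg h0 (by linarith [hcIcc.2] : (0:ℝ) ≤ 1 - c)]
    · exact hagree x₀ hx₀s
    · rw [hxCval, hagree x₀ hx₀s]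
      exact hcsign
    · exact fun i => hagree _ (hptss i)

/-- **Weak counterfactual explanations are not informative on large function spaces:**
on the class `T_∞` of decision trees of arbitrary finite depth, on the class `C` of
continuous functions, and on the class `D` of differentiable functions (all with values
in `[−1,1]`). The classifier of a scoring function `g` is `c_g(x) = sign (g x)`, and a
weak counterfactual of `f` at `x₀` is a point `x_C` with `c_f(x_C) ≠ c_f(x₀)`. -/
theorem weak_counterfactuals_noninformative_on_large_spaces
    {d : ℕ} (hd : 0 < d)
    (μ : Measure (Fin d → ℝ)) [IsProbabilityMeasure μ]
    (ρ : (Fin d → ℝ) → ℝ≥0∞) (hdens : μ = volume.withDensity ρ)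
    (F : Set ((Fin d → ℝ) → ℝ))
    (hF : F = {g | (∃ K, IsTree K g) ∧ ∀ x, g x ∈ Set.Icc (-1 : ℝ) 1} ∨
          F = {g | Continuous g ∧ ∀ x, g x ∈ Set.Icc (-1 : ℝ) 1} ∨
          F = {g | Differentiable ℝ g ∧ ∀ x, g x ∈ Set.Icc (-1 : ℝ) 1})
    (f : (Fin d → ℝ) → ℝ) (hf : f ∈ F) (x₀ : Fin d → ℝ)
    (xC : Fin d → ℝ) (hxC : Real.sign (f xC) ≠ Real.sign (f x₀))
    (n : ℕ) :
    rademacher μ n {g ∈ F | g x₀ = f x₀ ∧ Real.sign (g xC) ≠ Real.sign (g x₀)} =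
      rademacher μ n {g ∈ F | g x₀ = f x₀} := by
  classical
  have hx₀C : x₀ ≠ xC := fun h => hxC (by rw [h])
  have hμ0 : μ {xC} = 0 := by
    have hvol : (volume : Measure (Fin d → ℝ)) {xC} = 0 := by
      have hsing : ({xC} : Set (Fin d → ℝ)) = Set.pi Set.univ (fun j => {xC j}) := by
        ext y
        simp [Set.mem_pi, funext_iff]
      rw [hsing, volume_pi_pi]
      exact Finset.prod_eq_zero (Finset.mem_univ ⟨0, hd⟩) (by simp)
    rw [hdens, withDensity_apply _ (measurableSet_singleton xC),
      Measure.restrict_eq_zero.mpr hvol, lintegral_zero_measure]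
  set σm : Measure ℝ :=
    (2 : ℝ≥0∞)⁻¹ • Measure.dirac (-1 : ℝ) + (2 : ℝ≥0∞)⁻¹ • Measure.dirac (1 : ℝ) with hσm
  have hσprob : IsProbabilityMeasure σm := by
    constructor
    rw [hσm]
    simp [Measure.add_apply, Measure.smul_apply]
    exact ENNReal.inv_two_add_inv_two
  have hν0 : (μ.prod σm) {p : (Fin d → ℝ) × ℝ | p.1 = xC} = 0 := by
    have : {p : (Fin d → ℝ) × ℝ | p.1 = xC} = {xC} ×ˢ Set.univ := by
      ext p
      constructor
      · intro h
        exact ⟨h, trivial⟩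
      · intro h
        exact h.1
    rw [this, Measure.prod_prod, hμ0, zero_mul]
  have hae : ∀ᵐ ω ∂ sampleMeasure μ n, ∀ i, (ω i).1 ≠ xC := by
    rw [ae_all_iff]
    intro i
    rw [ae_iff]
    have hset : {ω : Fin n → (Fin d → ℝ) × ℝ | ¬(ω i).1 ≠ xC}
        = Set.pi Set.univ
            (fun k => if k = i then {p : (Fin d → ℝ) × ℝ | p.1 = xC} else Set.univ) := by
      ext ω
      simp only [Set.mem_setOf_eq, not_not, Set.mem_pi, Set.mem_univ, forall_true_left]
      constructor
      · intro h k
        by_cases hk : k = i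
        · subst hk; simp [h]
        · simp [hk]
      · intro h
        have := h i
        simpa using this
    rw [hset]
    unfold sampleMeasure
    rw [Measure.pi_pi]
    refine Finset.prod_eq_zero (Finset.mem_univ i) ?_
    simpa using hν0
  unfold rademacher
  apply integral_congr_ae
  filter_upwards [hae] with ω hω
  congr 1
  apply Set.Subset.antisymm
  · exact Set.image_mono (fun g hg => ⟨hg.1, hg.2.1⟩)
  · rintro v ⟨g, ⟨hgF, hg0⟩, rfl⟩
    obtain ⟨g', hg'F, hg'0, hg'sign, hg'pts⟩ :=
      exists_flip F hF g hgF x₀ xC hx₀C (fun i => (ω i).1) hω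
    refine ⟨g', ⟨hg'F, hg'0.trans hg0, hg'sign⟩, ?_⟩
    dsimp only
    congr 1
    exact Finset.sum_congr rfl (fun i _ => by rw [hg'pts i])
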